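/- Let ω be the unique positive real solution of e^ω = 2ω + 1 (which exists, is unique, and satisfies ω ≈ 1.25643). For every c > 0, the function α ↦ 2α·(1 − e^{−cα})^{−2} on α > 0 attains its infimum at α* = ω/c, and the minimum value equals κ/c where κ = 2ω/(1 − e^{−ω})². -/

import Mathlib

/-! Auxiliary definitions and lemmas -/

lemma exp125_lt : Real.exp 1.25 < 3.5 := by
  have h1 : Real.exp 1.25 = Real.exp 1 * Real.exp 0.25 := by
    rw [← Real.exp_add]; norm_num
  have h2 := Real.exp_bound' (x := 0.25) (by norm_num) (by norm_num) (n := 4) (by norm_num)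
  have h2' : Real.exp 0.25 ≤ 1.2841 := by
    refine h2.trans ?_
    norm_num [Finset.sum_range_succ, Nat.factorial]
  have h3 := Real.exp_one_lt_d9
  have h4 := Real.exp_pos (0.25 : ℝ)
  rw [h1]; nlinarith

lemma exp126_gt : 3.52 < Real.exp 1.26 := by
  have h1 : Real.exp 1.26 = Real.exp 1 * Real.exp 0.26 := by
    rw [← Real.exp_add]; norm_num
  have h2 := Real.sum_le_exp_of_nonneg (x := 0.26) (by norm_num) 4
  have h2' : (1.2967 : ℝ) ≤ Real.exp 0.26 := by
    refine le_trans ?_ h2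
    norm_num [Finset.sum_range_succ, Nat.factorial]
  have h3 := Real.exp_one_gt_d9
  have h4 := Real.exp_pos (1 : ℝ)
  rw [h1]; nlinarith

noncomputable def hF : ℝ → ℝ := fun x => Real.exp x - (2 * x + 1)

lemma hF_hasDeriv (x : ℝ) : HasDerivAt hF (Real.exp x - 2) x := by
  have : HasDerivAt (fun x : ℝ => 2 * x + 1) 2 x := by
    simpa using ((hasDerivAt_id x).const_mul 2).add_const 1
  exact (Real.hasDerivAt_exp x).sub this

lemma hF_strictMono : StrictMonoOn hF (Set.Ici (Real.log 2)) := by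
  apply strictMonoOn_of_deriv_pos (convex_Ici _)
  · exact fun x _ => ((hF_hasDeriv x).differentiableAt.continuousAt).continuousWithinAt
  · intro x hx
    rw [interior_Ici] at hx
    rw [(hF_hasDeriv x).deriv]
    have : (2 : ℝ) < Real.exp x := by
      calc (2:ℝ) = Real.exp (Real.log 2) := (Real.exp_log (by norm_num)).symm
      _ < Real.exp x := Real.exp_lt_exp.2 hx
    linarith

lemma hF_strictAnti : StrictAntiOn hF (Set.Icc 0 (Real.log 2)) := by
  apply strictAntiOn_of_deriv_neg (convex_Icc _ _)
  · exact fun x _ => ((hF_hasDeriv x).differentiableAt.continuousAt).continuousWithinAt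
  · intro x hx
    rw [interior_Icc] at hx
    rw [(hF_hasDeriv x).deriv]
    have : Real.exp x < 2 := by
      calc Real.exp x < Real.exp (Real.log 2) := Real.exp_lt_exp.2 hx.2
      _ = 2 := Real.exp_log (by norm_num)
    linarith

lemma log2_lt : Real.log 2 < 1.25 := by
  have := Real.log_two_lt_d9; linarith

lemma hF_neg {ω x : ℝ} (hω : hF ω = 0) (h1 : 1.25 < ω) (hx0 : 0 < x) (hxω : x < ω) :
    hF x < 0 := by
  rcases le_or_gt x (Real.log 2) with h | h
  · have := hF_strictAnti (Set.mem_Icc.2 ⟨le_refl 0, Real.log_nonneg (by norm_num)⟩)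
      (Set.mem_Icc.2 ⟨hx0.le, h⟩) hx0
    simpa [hF] using this
  · have := hF_strictMono (Set.mem_Ici.2 h.le)
      (Set.mem_Ici.2 (by linarith [log2_lt] : Real.log 2 ≤ ω)) hxω
    linarith [hω ▸ this]

lemma hF_pos {ω x : ℝ} (hω : hF ω = 0) (h1 : 1.25 < ω) (hxω : ω < x) : 0 < hF x := by
  have := hF_strictMono (Set.mem_Ici.2 (by linarith [log2_lt] : Real.log 2 ≤ ω))
    (Set.mem_Ici.2 (by linarith [log2_lt] : Real.log 2 ≤ x)) hxω
  linarith [hω ▸ this]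

/-- any positive root of `e^x = 2x + 1` lies in `(1.25, 1.26)`. -/
lemma root_bounds {ω : ℝ} (hω0 : 0 < ω) (hω : Real.exp ω = 2 * ω + 1) :
    1.25 < ω ∧ ω < 1.26 := by
  have hroot : hF ω = 0 := by simp [hF, hω]
  have hlog : Real.log 2 ≤ (1.25 : ℝ) := log2_lt.le
  constructor
  · by_contra h
    push_neg at h
    have : hF ω < 0 := by
      rcases le_or_gt ω (Real.log 2) with h2 | h2
      · have := hF_strictAnti (Set.mem_Icc.2 ⟨le_refl 0, Real.log_nonneg (by norm_num)⟩)
          (Set.mem_Icc.2 ⟨hω0.le, h2⟩) hω0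
        simpa [hF] using this
      · have hm := hF_strictMono.monotoneOn (Set.mem_Ici.2 h2.le)
          (Set.mem_Ici.2 hlog) h
        have h125 : hF 1.25 < 0 := by
          have := exp125_lt; simp only [hF]; norm_num; linarith
        linarith
    linarith [hroot]
  · by_contra h
    push_neg at h
    have hm := hF_strictMono.monotoneOn (Set.mem_Ici.2 (by linarith : Real.log 2 ≤ (1.26:ℝ)))
      (Set.mem_Ici.2 (by linarith : Real.log 2 ≤ ω)) h
    have h126 : 0 < hF 1.26 := by
      have := exp126_gt; simp only [hF]; norm_num; linarith
    linarith [hroot]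

noncomputable def gF : ℝ → ℝ := fun t => 2 * t / (1 - Real.exp (-t)) ^ 2

lemma one_sub_exp_neg_pos {x : ℝ} (hx : 0 < x) : 0 < 1 - Real.exp (-x) := by
  have : Real.exp (-x) < 1 := Real.exp_lt_one_iff.2 (by linarith)
  linarith

lemma gF_hasDeriv {x : ℝ} (hx : 0 < x) :
    HasDerivAt gF ((2 * (1 - Real.exp (-x)) ^ 2 -
      2 * x * (2 * (1 - Real.exp (-x)) ^ 1 * Real.exp (-x))) / ((1 - Real.exp (-x)) ^ 2) ^ 2) x := by
  have hi : HasDerivAt (fun t : ℝ => 1 - Real.exp (-t)) (Real.exp (-x)) x := by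
    have : HasDerivAt (fun t : ℝ => Real.exp (-t)) (-Real.exp (-x)) x := by
      have h := (hasDerivAt_neg x).exp
      rw [mul_neg_one] at h
      exact h
    have h := (hasDerivAt_const x (1:ℝ)).sub this
    rw [zero_sub, neg_neg] at h
    exact h
  have hd : HasDerivAt (fun t : ℝ => (1 - Real.exp (-t)) ^ 2)
      (2 * (1 - Real.exp (-x)) ^ 1 * Real.exp (-x)) x := by
    have h := hi.pow 2
    rw [Nat.cast_ofNat] at h
    exact h
  have hc : HasDerivAt (fun t : ℝ => 2 * t) 2 x := by
    simpa using (hasDerivAt_id x).const_mul 2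
  exact hc.div hd (pow_pos (one_sub_exp_neg_pos hx) 2).ne'

lemma num_sign {x : ℝ} :
    2 * (1 - Real.exp (-x)) ^ 2 - 2 * x * (2 * (1 - Real.exp (-x)) ^ 1 * Real.exp (-x))
      = 2 * (1 - Real.exp (-x)) * Real.exp (-x) * (Real.exp x - (2 * x + 1)) := by
  have h : Real.exp (-x) * Real.exp x = 1 := by
    rw [← Real.exp_add]; simp
  linear_combination (-2 * (1 - Real.exp (-x))) * h

/-- the key minimisation: `gF ω ≤ gF t` for all `t > 0`. -/
lemma gF_min {ω : ℝ} (hω : Real.exp ω = 2 * ω + 1) (h1 : 1.25 < ω)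
    {t : ℝ} (ht : 0 < t) : gF ω ≤ gF t := by
  have hroot : hF ω = 0 := by simp [hF, hω]
  have hω0 : (0:ℝ) < ω := by linarith
  rcases lt_trichotomy t ω with hlt | heq | hgt
  · have hanti : StrictAntiOn gF (Set.Icc t ω) := by
      apply strictAntiOn_of_deriv_neg (convex_Icc _ _)
      · intro x hx
        exact ((gF_hasDeriv (lt_of_lt_of_le ht hx.1)).differentiableAt.continuousAt).continuousWithinAt
      · intro x hx
        rw [interior_Icc] at hx
        have hx0 : 0 < x := lt_trans ht hx.1
        rw [(gF_hasDeriv hx0).deriv, num_sign]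
        apply div_neg_of_neg_of_pos
        · have hneg : Real.exp x - (2 * x + 1) < 0 := hF_neg hroot h1 hx0 hx.2
          have hu := one_sub_exp_neg_pos hx0
          have he := Real.exp_pos (-x)
          exact mul_neg_of_pos_of_neg
            (mul_pos (by linarith : (0:ℝ) < 2 * (1 - Real.exp (-x))) he) hneg
        · exact pow_pos (pow_pos (one_sub_exp_neg_pos hx0) 2) 2
    exact (hanti (Set.mem_Icc.2 ⟨le_refl t, hlt.le⟩)
      (Set.mem_Icc.2 ⟨hlt.le, le_refl ω⟩) hlt).le
  · rw [heq]
  · have hmono : StrictMonoOn gF (Set.Icc ω t) := by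
      apply strictMonoOn_of_deriv_pos (convex_Icc _ _)
      · intro x hx
        exact ((gF_hasDeriv (lt_of_lt_of_le hω0 hx.1)).differentiableAt.continuousAt).continuousWithinAt
      · intro x hx
        rw [interior_Icc] at hx
        have hx0 : 0 < x := lt_trans hω0 hx.1
        rw [(gF_hasDeriv hx0).deriv, num_sign]
        apply div_pos
        · have hpos : 0 < Real.exp x - (2 * x + 1) := hF_pos hroot h1 hx.1
          have hu := one_sub_exp_neg_pos hx0
          have he := Real.exp_pos (-x)
          exact mul_pos
            (mul_pos (by linarith : (0:ℝ) < 2 * (1 - Real.exp (-x))) he) hpos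
        · exact pow_pos (pow_pos (one_sub_exp_neg_pos hx0) 2) 2
    exact (hmono (Set.mem_Icc.2 ⟨le_refl ω, hgt.le⟩)
      (Set.mem_Icc.2 ⟨hgt.le, le_refl t⟩) hgt).le

/-- there is a unique positive real `ω` with `e^ω = 2ω + 1` (and it
satisfies `ω ≈ 1.25643`, in particular `1.25 < ω < 1.26`); for every `c > 0`, the
function `α ↦ 2α·(1 − e^{−cα})^{−2}` on `α > 0` attains its infimum (is minimised) at
`α* = ω/c`, and the minimum value equals `κ/c` where `κ = 2ω/(1 − e^{−ω})²`. -/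
theorem kappa_optimisation :
    (∃! ω : ℝ, 0 < ω ∧ Real.exp ω = 2 * ω + 1) ∧
    (∀ ω : ℝ, 0 < ω → Real.exp ω = 2 * ω + 1 →
      1.25 < ω ∧ ω < 1.26 ∧
      ∀ c : ℝ, 0 < c →
        IsLeast ((fun α : ℝ => 2 * α / (1 - Real.exp (-(c * α))) ^ 2) '' Set.Ioi 0)
          ((2 * ω / (1 - Real.exp (-ω)) ^ 2) / c) ∧
        2 * (ω / c) / (1 - Real.exp (-(c * (ω / c)))) ^ 2
          = (2 * ω / (1 - Real.exp (-ω)) ^ 2) / c) := by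
  constructor
  · -- existence and uniqueness
    have hcont : ContinuousOn hF (Set.Icc 1.25 1.26) := fun x _ =>
      ((hF_hasDeriv x).differentiableAt.continuousAt).continuousWithinAt
    have hIVT := intermediate_value_Icc (by norm_num : (1.25:ℝ) ≤ 1.26) hcont
    have h0mem : (0:ℝ) ∈ Set.Icc (hF 1.25) (hF 1.26) := by
      constructor
      · have := exp125_lt; simp only [hF]; norm_num; linarith
      · have := exp126_gt; simp only [hF]; norm_num; linarith
    obtain ⟨ω0, hω0mem, hω0val⟩ := hIVT h0mem
    have hω0pos : 0 < ω0 := by have := hω0mem.1; norm_num at this ⊢; linarith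
    have hω0root : Real.exp ω0 = 2 * ω0 + 1 := by
      simp only [hF] at hω0val; linarith
    refine ⟨ω0, ⟨hω0pos, hω0root⟩, ?_⟩
    rintro y ⟨hy0, hy⟩
    have hb1 := root_bounds hy0 hy
    have hb2 := root_bounds hω0pos hω0root
    apply hF_strictMono.injOn
    · exact Set.mem_Ici.2 (by linarith [log2_lt, hb1.1])
    · exact Set.mem_Ici.2 (by linarith [log2_lt, hb2.1])
    · simp [hF, hy, hω0root]
  · intro ω hω0 hω
    obtain ⟨h1, h2⟩ := root_bounds hω0 hω
    refine ⟨h1, h2, fun c hc => ?_⟩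
    have hcω : c * (ω / c) = ω := by field_simp
    have hden : (1 - Real.exp (-ω)) ^ 2 ≠ 0 := (pow_pos (one_sub_exp_neg_pos hω0) 2).ne'
    have hE : 2 * (ω / c) / (1 - Real.exp (-(c * (ω / c)))) ^ 2
        = (2 * ω / (1 - Real.exp (-ω)) ^ 2) / c := by
      rw [hcω]; field_simp
    refine ⟨⟨⟨ω / c, by exact Set.mem_Ioi.2 (div_pos hω0 hc), hE⟩, ?_⟩, hE⟩
    rintro y ⟨α, hα, rfl⟩
    have hα0 : 0 < α := hα
    have hkey : gF ω ≤ gF (c * α) := gF_min hω h1 (mul_pos hc hα0)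
    have hstep : gF ω / c ≤ gF (c * α) / c := by
      gcongr
    have hrw : gF (c * α) / c = 2 * α / (1 - Real.exp (-(c * α))) ^ 2 := by
      have hd : (1 - Real.exp (-(c * α))) ^ 2 ≠ 0 :=
        (pow_pos (one_sub_exp_neg_pos (mul_pos hc hα0)) 2).ne'
      simp only [gF]
      field_simp
    calc (2 * ω / (1 - Real.exp (-ω)) ^ 2) / c = gF ω / c := rfl
      _ ≤ gF (c * α) / c := hstep
      _ = 2 * α / (1 - Real.exp (-(c * α))) ^ 2 := hrw
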